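/- Let Ω be a finite non-empty sample space, 𝒬 a closed, convex, non-empty subset of the probability measures on Ω, and P a probability measure on Ω with λ_𝒬(P) < 1. If Q ∈ 𝒬 and the probability measure R satisfy P = λ_𝒬(P)·Q + (1 − λ_𝒬(P))·R, then λ_𝒬(R) = 0; in particular, R ∉ 𝒬. -/

import Mathlib

open scoped BigOperators

/-- A function `P : Ω → ℝ` on a finite sample space is a probability measure if it is
nonnegative and sums to one. -/
def IsProb {Ω : Type*} [Fintype Ω] (P : Ω → ℝ) : Prop :=
  (∀ ω, 0 ≤ P ω) ∧ ∑ ω, P ω = 1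

/-- The latent weight of the class `𝒬` in `P`:
`λ_𝒬(P) = sup { λ | P ≥ λ·Q for some Q ∈ 𝒬 }`. -/
noncomputable def latentWeight {Ω : Type*} [Fintype Ω]
    (𝒬 : Set (Ω → ℝ)) (P : Ω → ℝ) : ℝ :=
  sSup {l : ℝ | ∃ Q ∈ 𝒬, ∀ ω, l * Q ω ≤ P ω}

lemma latent_bdd {Ω : Type*} [Fintype Ω]
    (𝒬 : Set (Ω → ℝ)) (h𝒬prob : ∀ Q ∈ 𝒬, IsProb Q)
    (P : Ω → ℝ) (hP : IsProb P) :
    BddAbove {l : ℝ | ∃ Q ∈ 𝒬, ∀ ω, l * Q ω ≤ P ω} := by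
  refine ⟨1, ?_⟩
  rintro l ⟨Q, hQ, hle⟩
  have h1 : ∑ ω, l * Q ω ≤ ∑ ω, P ω := Finset.sum_le_sum fun ω _ => hle ω
  rw [← Finset.mul_sum, (h𝒬prob Q hQ).2, hP.2, mul_one] at h1
  exact h1

lemma latent_zero_mem {Ω : Type*} [Fintype Ω]
    (𝒬 : Set (Ω → ℝ)) (h𝒬ne : 𝒬.Nonempty)
    (P : Ω → ℝ) (hP : IsProb P) :
    (0 : ℝ) ∈ {l : ℝ | ∃ Q ∈ 𝒬, ∀ ω, l * Q ω ≤ P ω} := by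
  obtain ⟨Q, hQ⟩ := h𝒬ne
  exact ⟨Q, hQ, fun ω => by simpa using hP.1 ω⟩

/-- If `𝒬` is moreover convex and `λ_𝒬(P) < 1`, then the residual `R` in the mixture
representation `P = λ_𝒬(P)·Q + (1 − λ_𝒬(P))·R` satisfies `λ_𝒬(R) = 0`; in particular
`R ∉ 𝒬`. -/
theorem stmt3 {Ω : Type*} [Fintype Ω] [Nonempty Ω]
    (𝒬 : Set (Ω → ℝ)) (h𝒬prob : ∀ Q ∈ 𝒬, IsProb Q)
    (h𝒬closed : IsClosed 𝒬) (h𝒬ne : 𝒬.Nonempty) (h𝒬convex : Convex ℝ 𝒬)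
    (P : Ω → ℝ) (hP : IsProb P) (hlt : latentWeight 𝒬 P < 1)
    (Q : Ω → ℝ) (hQ : Q ∈ 𝒬) (R : Ω → ℝ) (hR : IsProb R)
    (hmix : ∀ ω, P ω = latentWeight 𝒬 P * Q ω + (1 - latentWeight 𝒬 P) * R ω) :
    latentWeight 𝒬 R = 0 ∧ R ∉ 𝒬 := by
  set lam := latentWeight 𝒬 P with hlam
  have hbddP := latent_bdd 𝒬 h𝒬prob P hP
  have hbddR := latent_bdd 𝒬 h𝒬prob R hR
  have hlam0 : 0 ≤ lam := le_csSup hbddP (latent_zero_mem 𝒬 h𝒬ne P hP)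
  have hR0 : 0 ≤ latentWeight 𝒬 R := le_csSup hbddR (latent_zero_mem 𝒬 h𝒬ne R hR)
  have hRle : latentWeight 𝒬 R ≤ 0 := by
    by_contra h
    push_neg at h
    -- there is a positive element ε of the set for R
    obtain ⟨ε, hεmem, hεpos⟩ := exists_lt_of_lt_csSup ⟨0, latent_zero_mem 𝒬 h𝒬ne R hR⟩ h
    obtain ⟨Q', hQ', hQ'le⟩ := hεmem
    have h1lam : 0 < 1 - lam := by linarith
    set lam' := lam + (1 - lam) * ε with hlam'
    have hlam'pos : 0 < lam' := by nlinarith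
    have hgtlam : lam < lam' := by nlinarith
    -- mixture Q'' ∈ 𝒬
    have ha : 0 ≤ lam / lam' := div_nonneg hlam0 hlam'pos.le
    have hb : 0 ≤ (1 - lam) * ε / lam' := div_nonneg (by nlinarith) hlam'pos.le
    have hab : lam / lam' + (1 - lam) * ε / lam' = 1 := by
      field_simp
      exact hlam'.symm
    have hQ'' : (lam / lam') • Q + ((1 - lam) * ε / lam') • Q' ∈ 𝒬 :=
      h𝒬convex hQ hQ' ha hb hab
    have hmem : lam' ∈ {l : ℝ | ∃ Qx ∈ 𝒬, ∀ ω, l * Qx ω ≤ P ω} := by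
      refine ⟨_, hQ'', fun ω => ?_⟩
      have h2 : (1 - lam) * (ε * Q' ω) ≤ (1 - lam) * R ω :=
        mul_le_mul_of_nonneg_left (hQ'le ω) h1lam.le
      have := hmix ω
      simp only [Pi.add_apply, Pi.smul_apply, smul_eq_mul]
      rw [this]
      field_simp
      nlinarith
    have : lam' ≤ lam := le_csSup hbddP hmem
    linarith
  have hRzero : latentWeight 𝒬 R = 0 := le_antisymm hRle hR0
  refine ⟨hRzero, fun hRmem => ?_⟩
  have h1mem : (1 : ℝ) ∈ {l : ℝ | ∃ Qx ∈ 𝒬, ∀ ω, l * Qx ω ≤ R ω} :=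
    ⟨R, hRmem, fun ω => by simp⟩
  have : (1 : ℝ) ≤ latentWeight 𝒬 R := le_csSup hbddR h1mem
  linarith
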